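/- Let a₁,…,a_n ∈ ℂ be distinct. If (x₁,…,x_n) ∈ ℂⁿ satisfies x_k² = Σ_{j≠k} (x_j − x_k)/(a_j − a_k) for every k = 1,…,n, then Σ_{k=1}^n x_k = 0. -/

import Mathlib

open Polynomial Finset

private lemma aux_derivative_prod {N : ℕ} (a : Fin N → ℂ) (s : Finset (Fin N)) :
    derivative (∏ i ∈ s, (X - C (a i))) = ∑ i ∈ s, ∏ j ∈ s.erase i, (X - C (a j)) := by
  induction s using Finset.induction_on with
  | empty => simp
  | @insert k s hks ih =>
    rw [Finset.prod_insert hks, derivative_mul, ih, Finset.sum_insert hks,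
      Finset.erase_insert hks]
    have h1 : derivative (X - C (a k)) = 1 := by simp
    rw [h1, one_mul, Finset.mul_sum]
    congr 1
    refine Finset.sum_congr rfl fun i hi => ?_
    have hki : k ≠ i := fun h => hks (h ▸ hi)
    rw [Finset.erase_insert_of_ne hki,
      Finset.prod_insert (fun h => hks (Finset.erase_subset _ _ h))]

private lemma aux_sq_dvd (p : ℂ[X]) (t : ℂ) (h0 : p.eval t = 0) (h1 : (derivative p).eval t = 0) :
    (X - C t) ^ 2 ∣ p := by
  obtain ⟨q, hq⟩ := (dvd_iff_isRoot (p := p) (a := t)).mpr h0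
  subst hq
  rw [derivative_mul] at h1
  simp only [derivative_sub, derivative_X, derivative_C, sub_zero, one_mul, eval_add, eval_mul,
    eval_sub, eval_X, eval_C, sub_self, zero_mul, add_zero] at h1
  obtain ⟨r, hr⟩ := (dvd_iff_isRoot (p := q) (a := t)).mpr h1
  rw [hr, sq]
  ring_nf
  exact ⟨r, by ring⟩

private lemma aux_exists_y (m : ℕ) (a x : Fin (m+1) → ℂ) :
    ∃ y : ℂ[X], y ≠ 0 ∧ y.natDegree ≤ m + 1 ∧
      ∀ k, (derivative y).eval (a k) = x k * y.eval (a k) := by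
  classical
  set V := Polynomial.degreeLT ℂ (m+2) with hV
  let φ : V →ₗ[ℂ] (Fin (m+1) → ℂ) := LinearMap.pi fun k =>
    ((Polynomial.leval (a k)).comp (Polynomial.derivative.comp V.subtype)) -
      (x k) • ((Polynomial.leval (a k)).comp V.subtype)
  have hrankV : Module.finrank ℂ V = m + 2 := by
    rw [(Polynomial.degreeLTEquiv ℂ (m+2)).finrank_eq]
    simp [Module.finrank_fin_fun]
  have hker : LinearMap.ker φ ≠ ⊥ := by
    intro h
    have hinj : Function.Injective φ := LinearMap.ker_eq_bot.mp h
    have hle := LinearMap.finrank_le_finrank_of_injective hinj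
    rw [hrankV, Module.finrank_fin_fun] at hle
    omega
  obtain ⟨b, hbker, hb0⟩ := Submodule.exists_mem_ne_zero_of_ne_bot hker
  refine ⟨(b : ℂ[X]), ?_, ?_, ?_⟩
  · simpa using hb0
  · have hdeg : ((b : ℂ[X])).degree < ((m + 2 : ℕ) : WithBot ℕ) :=
      Polynomial.mem_degreeLT.mp b.2
    have hb0' : (b : ℂ[X]) ≠ 0 := by simpa using hb0
    have := (Polynomial.natDegree_lt_iff_degree_lt hb0').mpr hdeg
    omega
  · intro k
    have := LinearMap.mem_ker.mp hbker
    have hcomp := congrFun this k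
    simp only [φ, LinearMap.pi_apply, LinearMap.sub_apply, LinearMap.comp_apply,
      LinearMap.smul_apply, Submodule.coe_subtype, Polynomial.leval_apply,
      Pi.zero_apply, smul_eq_mul] at hcomp
    exact sub_eq_zero.mp hcomp

/-- **Proposition 6(a).** For distinct complex `a₁, …, a_n`, any solution of
`x_k² = Σ_{j≠k} (x_j - x_k)/(a_j - a_k)` satisfies `Σ_k x_k = 0`. -/
theorem bethe_system_sum_zero
    (n : ℕ) (a : Fin n → ℂ) (ha : Function.Injective a) (x : Fin n → ℂ)
    (hx : ∀ k, (x k) ^ 2 = ∑ j ∈ Finset.univ.erase k, (x j - x k) / (a j - a k)) :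
    ∑ k, x k = 0 := by
  classical
  rcases n with _ | m
  · simp
  obtain ⟨y, hy0, hydeg, hyint⟩ := aux_exists_y m a x
  set Ak : Fin (m+1) → ℂ[X] := fun j => ∏ i ∈ univ.erase j, (X - C (a i)) with hAk
  set A : ℂ[X] := ∏ i, (X - C (a i)) with hA
  set B : ℂ[X] := ∑ j, C (x j) * Ak j with hB
  set Θ : ℂ[X] := A * derivative (derivative y) - derivative A * derivative y + B * y with hΘ
  have hAkMonic : ∀ j, (Ak j).Monic := fun j =>
    monic_prod_of_monic _ _ fun i _ => monic_X_sub_C _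
  have hAkDeg : ∀ j, (Ak j).natDegree = m := by
    intro j
    rw [hAk]
    rw [natDegree_prod_of_monic _ _ (fun i _ => monic_X_sub_C _)]
    simp [Finset.card_erase_of_mem]
  have hAMonic : A.Monic := monic_prod_of_monic _ _ fun i _ => monic_X_sub_C _
  have hADeg : A.natDegree = m + 1 := by
    rw [hA, natDegree_prod_of_monic _ _ (fun i _ => monic_X_sub_C _)]
    simp
  have hBDeg : B.natDegree ≤ m := by
    rw [hB]
    refine natDegree_sum_le_of_forall_le _ _ fun j _ => ?_
    refine (natDegree_mul_le).trans ?_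
    simp [hAkDeg j]
  have hBm : B.coeff m = ∑ j, x j := by
    rw [hB, finset_sum_coeff]
    refine Finset.sum_congr rfl fun j _ => ?_
    rw [coeff_C_mul]
    have h1 : (Ak j).coeff m = 1 := by
      have := (hAkMonic j).coeff_natDegree
      rwa [hAkDeg j] at this
    rw [h1, mul_one]
  have hdA : derivative A = ∑ j, Ak j := by
    simp only [hA, hAk]
    exact aux_derivative_prod a univ
  have hevA : ∀ k, eval (a k) A = 0 := by
    intro k
    simp only [hA]
    rw [eval_prod]
    exact Finset.prod_eq_zero (mem_univ k) (by simp)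
  have hevAk0 : ∀ k j, j ≠ k → eval (a k) (Ak j) = 0 := by
    intro k j hj
    simp only [hAk]
    rw [eval_prod]
    refine Finset.prod_eq_zero (Finset.mem_erase.mpr ⟨Ne.symm hj, mem_univ k⟩) (by simp)
  have hevdA : ∀ k, eval (a k) (derivative A) = eval (a k) (Ak k) := by
    intro k
    rw [hdA, eval_finset_sum]
    exact Finset.sum_eq_single k (fun j _ hj => hevAk0 k j hj)
      (fun h => absurd (mem_univ k) h)
  have hevB : ∀ k, eval (a k) B = x k * eval (a k) (Ak k) := by
    intro k
    simp only [hB]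
    rw [eval_finset_sum]
    rw [Finset.sum_eq_single k (fun j _ hj => by rw [eval_mul, eval_C, hevAk0 k j hj, mul_zero])
      (fun h => absurd (mem_univ k) h)]
    rw [eval_mul, eval_C]
  have hroot : ∀ k, eval (a k) Θ = 0 := by
    intro k
    simp only [hΘ, eval_add, eval_sub, eval_mul]
    rw [hevA, hevdA, hevB, hyint k]
    ring
  -- second derivative evaluations
  have hroot' : ∀ k, eval (a k) (derivative Θ) = 0 := by
    intro k
    set P : Fin (m+1) → ℂ := fun j => ∏ l ∈ (univ.erase k).erase j, (a k - a l) with hP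
    have hevdAkj : ∀ j, j ≠ k → eval (a k) (derivative (Ak j)) = P j := by
      intro j hj
      simp only [hAk]
      rw [aux_derivative_prod, eval_finset_sum]
      have hkmem : k ∈ univ.erase j := Finset.mem_erase.mpr ⟨Ne.symm hj, mem_univ k⟩
      rw [Finset.sum_eq_single k ?_ (fun h => absurd hkmem h)]
      · rw [eval_prod, Finset.erase_right_comm]
        simp [hP]
      · intro i hi hik
        rw [eval_prod]
        refine Finset.prod_eq_zero (Finset.mem_erase.mpr ⟨Ne.symm hik, hkmem⟩) (by simp)
    have hevdAkk : eval (a k) (derivative (Ak k)) = ∑ i ∈ univ.erase k, P i := by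
      simp only [hAk]
      rw [aux_derivative_prod, eval_finset_sum]
      refine Finset.sum_congr rfl fun i _ => ?_
      rw [eval_prod]
      simp [hP]
    have hevddA : eval (a k) (derivative (derivative A)) =
        2 * ∑ j ∈ univ.erase k, P j := by
      rw [hdA, derivative_sum, eval_finset_sum]
      rw [← Finset.sum_erase_add _ _ (mem_univ k)]
      rw [hevdAkk, Finset.sum_congr rfl (fun j hj => hevdAkj j (Finset.mem_erase.mp hj).1)]
      ring
    have hevdB : eval (a k) (derivative B) =
        (∑ j ∈ univ.erase k, x j * P j) + x k * ∑ j ∈ univ.erase k, P j := by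
      simp only [hB]
      rw [derivative_sum, eval_finset_sum]
      have hterm : ∀ j, eval (a k) (derivative (C (x j) * Ak j)) =
          x j * eval (a k) (derivative (Ak j)) := by
        intro j
        rw [derivative_C_mul, eval_mul, eval_C]
      rw [Finset.sum_congr rfl fun j _ => hterm j]
      rw [← Finset.sum_erase_add _ _ (mem_univ k)]
      rw [hevdAkk, Finset.sum_congr rfl
        (fun j hj => by rw [hevdAkj j (Finset.mem_erase.mp hj).1])]
    have hkey : x k ^ 2 * eval (a k) (Ak k) +
        ∑ j ∈ univ.erase k, (x j - x k) * P j = 0 := by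
      rw [hx k, Finset.sum_mul, ← Finset.sum_add_distrib]
      refine Finset.sum_eq_zero fun j hj => ?_
      have hjk : j ≠ k := (Finset.mem_erase.mp hj).1
      have hne : a j - a k ≠ 0 := sub_ne_zero.mpr fun h => hjk (ha h)
      have hπ : eval (a k) (Ak k) = (a k - a j) * P j := by
        simp only [hAk]
        rw [eval_prod]
        simp only [eval_sub, eval_X, eval_C]
        rw [← Finset.mul_prod_erase _ _ hj]
      rw [hπ]
      field_simp
      ring
    have hsplit : ∑ j ∈ univ.erase k, (x j - x k) * P j
        = (∑ j ∈ univ.erase k, x j * P j) - x k * ∑ j ∈ univ.erase k, P j := by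
      rw [Finset.mul_sum, ← Finset.sum_sub_distrib]
      exact Finset.sum_congr rfl fun j _ => by ring
    have hkey' : x k ^ 2 * eval (a k) (Ak k) +
        ((∑ j ∈ univ.erase k, x j * P j) - x k * ∑ j ∈ univ.erase k, P j) = 0 := by
      rw [← hsplit]
      exact hkey
    simp only [hΘ, derivative_add, derivative_sub, derivative_mul, eval_add, eval_sub, eval_mul]
    rw [hevA k, hevddA, hevdB, hevB, hyint k]
    linear_combination (eval (a k) y) * hkey'
  have hdvd : (∏ k, (X - C (a k)) ^ 2) ∣ Θ := by
    refine Finset.prod_dvd_of_coprime ?_ fun k _ => aux_sq_dvd _ _ (hroot k) (hroot' k)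
    intro i _ j hj hij
    exact (Polynomial.isCoprime_X_sub_C_of_isUnit_sub
      ((sub_ne_zero.mpr (fun h => hij (ha h))).isUnit)).pow
  have hprodMonic : (∏ k, (X - C (a k)) ^ 2).Monic :=
    monic_prod_of_monic _ _ fun i _ => (monic_X_sub_C _).pow 2
  have hprodDeg : (∏ k, (X - C (a k)) ^ 2).natDegree = 2 * (m + 1) := by
    rw [natDegree_prod_of_monic _ _ (fun i _ => (monic_X_sub_C _).pow 2)]
    simp [natDegree_pow]
    ring
  have hy1deg : (derivative y).natDegree ≤ m := by
    have := natDegree_derivative_le y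
    omega
  have hy2deg : (derivative (derivative y)).natDegree ≤ m - 1 := by
    have := natDegree_derivative_le (derivative y)
    omega
  have hΘdeg : Θ.natDegree ≤ 2 * m + 1 := by
    rw [hΘ]
    refine (natDegree_add_le _ _).trans (max_le ((natDegree_sub_le _ _).trans (max_le ?_ ?_)) ?_)
    · refine (natDegree_mul_le).trans ?_
      have := hy2deg
      omega
    · refine (natDegree_mul_le).trans ?_
      have h1 := natDegree_derivative_le A
      rw [hADeg] at h1
      omega
    · refine (natDegree_mul_le).trans ?_
      omega
  have hΘ0 : Θ = 0 := by
    have hlt : ((2*m+1 : ℕ) : WithBot ℕ) < (∏ k, (X - C (a k)) ^ 2).degree := by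
      rw [degree_eq_natDegree hprodMonic.ne_zero, hprodDeg]
      exact_mod_cast (by omega : 2*m+1 < 2*(m+1))
    exact Polynomial.eq_zero_of_dvd_of_degree_lt hdvd
      (lt_of_le_of_lt (degree_le_natDegree.trans (by exact_mod_cast hΘdeg)) hlt)
  -- coefficient extraction at m + natDegree y
  set d := y.natDegree with hd
  have hcz : Θ.coeff (m + d) = 0 := by rw [hΘ0]; simp
  have c1 : (A * derivative (derivative y)).coeff (m + d) = 0 := by
    rw [coeff_mul]
    refine Finset.sum_eq_zero fun p hp => ?_
    have hpij : p.1 + p.2 = m + d := Finset.HasAntidiagonal.mem_antidiagonal.mp hp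
    by_cases hi : p.1 ≤ m + 1
    · have : y.coeff (p.2 + 1 + 1) = 0 := by
        refine coeff_eq_zero_of_natDegree_lt ?_
        omega
      rw [coeff_derivative, coeff_derivative, this]
      ring
    · have : A.coeff p.1 = 0 := by
        refine coeff_eq_zero_of_natDegree_lt ?_
        omega
      rw [this, zero_mul]
  have c2 : (derivative A * derivative y).coeff (m + d) = 0 := by
    rw [coeff_mul]
    refine Finset.sum_eq_zero fun p hp => ?_
    have hpij : p.1 + p.2 = m + d := Finset.HasAntidiagonal.mem_antidiagonal.mp hp
    by_cases hi : p.1 ≤ m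
    · have : y.coeff (p.2 + 1) = 0 := by
        refine coeff_eq_zero_of_natDegree_lt ?_
        omega
      rw [coeff_derivative y, this]
      ring
    · have : A.coeff (p.1 + 1) = 0 := by
        refine coeff_eq_zero_of_natDegree_lt ?_
        omega
      rw [coeff_derivative, this, zero_mul, zero_mul]
  have c3 : (B * y).coeff (m + d) = (∑ j, x j) * y.coeff d := by
    rw [coeff_mul]
    rw [Finset.sum_eq_single_of_mem (m, d) (Finset.HasAntidiagonal.mem_antidiagonal.mpr rfl)]
    · rw [hBm]
    · rintro ⟨i, j⟩ hp hne
      have hpij : i + j = m + d := Finset.HasAntidiagonal.mem_antidiagonal.mp hp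
      by_cases hi : i ≤ m
      · rcases Nat.lt_or_ge i m with hlt | hge
        · have : y.coeff j = 0 := by
            refine coeff_eq_zero_of_natDegree_lt ?_
            omega
          simp [this]
        · have him : i = m := by omega
          have hjd : j = d := by omega
          exact absurd (by rw [him, hjd]) hne
      · have : B.coeff i = 0 := by
          refine coeff_eq_zero_of_natDegree_lt ?_
          omega
        simp [this]
  have hfinal : (∑ j, x j) * y.coeff d = 0 := by
    have : Θ.coeff (m + d) =
        (A * derivative (derivative y)).coeff (m + d)
        - (derivative A * derivative y).coeff (m + d) + (B * y).coeff (m + d) := by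
      rw [hΘ]
      simp [coeff_add, coeff_sub]
    rw [hcz, c1, c2, c3] at this
    simpa using this.symm
  have hlead : y.coeff d ≠ 0 := by
    rw [hd]
    exact fun h => hy0 (leadingCoeff_eq_zero.mp h)
  exact (mul_eq_zero.mp hfinal).resolve_right hlead
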